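/- Let p ≥ m be positive integers and let H₁, …, H_p be affine hyperplanes in ℝ^m. Then the number of regions of the arrangement, i.e., the number of connected components of ℝ^m \ (H₁ ∪ ⋯ ∪ H_p), is at most binom(p, ≤ m) = ∑_{i=0}^{m} binom(p, i). -/

import Mathlib

open Module

private lemma pascal_sum (p M : ℕ) :
    ∑ i ∈ Finset.range (M + 1), (p + 1).choose i =
      ∑ i ∈ Finset.range (M + 1), p.choose i + ∑ i ∈ Finset.range M, p.choose i := by
  induction M with
  | zero => simp
  | succ M ih =>
    rw [Finset.sum_range_succ, ih, Finset.sum_range_succ (f := fun i => p.choose i) (n := M + 1),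
      Finset.sum_range_succ (f := fun i => p.choose i) (n := M)]
    have h := Nat.choose_succ_succ' p M
    omega

private lemma combo_pos {a b A B : ℝ} (ha : 0 ≤ a) (hb : 0 ≤ b) (hab : a + b = 1)
    (hA : 0 < A) (hB : 0 < B) : 0 < a * A + b * B := by
  rcases eq_or_lt_of_le ha with h | h
  · have hb1 : b = 1 := by linarith
    simp [← h, hb1, hB]
  · nlinarith [mul_nonneg hb hB.le, mul_pos h hA]

private def signSet {E : Type} [AddCommGroup E] [Module ℝ E] {p : ℕ}
    (f : Fin p → E →ₗ[ℝ] ℝ) (c : Fin p → ℝ) : Set (Fin p → Bool) :=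
  {s | ∃ z : E, ∀ i, (f i z + c i ≠ 0) ∧ decide (0 < f i z + c i) = s i}

private lemma signSet_card_le (p : ℕ) :
    ∀ (m : ℕ) (E : Type) [AddCommGroup E] [Module ℝ E] [FiniteDimensional ℝ E],
    finrank ℝ E ≤ m → ∀ (f : Fin p → E →ₗ[ℝ] ℝ) (c : Fin p → ℝ),
    Nat.card (signSet f c) ≤ ∑ i ∈ Finset.range (m + 1), p.choose i := by
  induction p with
  | zero =>
    intro m E _ _ _ _ f c
    have h1 : Nat.card (signSet f c) ≤ Nat.card (Fin 0 → Bool) :=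
      Nat.card_le_card_of_injective _ Subtype.val_injective
    have h2 : Nat.card (Fin 0 → Bool) = 1 := by simp [Nat.card_eq_fintype_card]
    have h3 : (1:ℕ) ≤ ∑ i ∈ Finset.range (m + 1), Nat.choose 0 i := by
      have := Finset.single_le_sum (f := fun i => Nat.choose 0 i)
        (fun i _ => Nat.zero_le _) (Finset.mem_range.mpr (Nat.succ_pos m))
      simpa using this
    omega
  | succ p ih =>
    intro m E _ _ _ hE f c
    classical
    set F := f (Fin.last p) with hFdef
    set C := c (Fin.last p) with hCdef
    set f' : Fin p → E →ₗ[ℝ] ℝ := fun i => f i.castSucc with hf'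
    set c' : Fin p → ℝ := fun i => c i.castSucc with hc'
    have hmem_init : ∀ s ∈ signSet f c, Fin.init s ∈ signSet f' c' := by
      rintro s ⟨z, hz⟩
      exact ⟨z, fun i => by simpa [Fin.init, hf', hc'] using hz i.castSucc⟩
    by_cases hF0 : F = 0
    · by_cases hC0 : C = 0
      · have hempty : signSet f c = ∅ := by
          ext s
          simp only [signSet, Set.mem_setOf_eq, Set.mem_empty_iff_false, iff_false, not_exists]
          intro z hz
          have := (hz (Fin.last p)).1
          rw [← hFdef, ← hCdef, hF0, hC0] at this
          simp at this
        rw [hempty]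
        simp
      · -- init is injective on signSet f c
        have hlast : ∀ s ∈ signSet f c, s (Fin.last p) = decide (0 < C) := by
          rintro s ⟨z, hz⟩
          have h := (hz (Fin.last p)).2
          rw [← hFdef, ← hCdef, hF0] at h
          simpa using h.symm
        have hinj : Function.Injective
            (fun s : signSet f c => (⟨Fin.init s.1, hmem_init s.1 s.2⟩ : signSet f' c')) := by
          rintro ⟨s, hs⟩ ⟨t, ht⟩ hst
          simp only [Subtype.mk.injEq] at hst
          ext1
          show s = t
          have h2 : Fin.snoc (Fin.init s) (s (Fin.last p)) =
              Fin.snoc (Fin.init t) (t (Fin.last p)) := by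
            rw [hst, hlast s hs, hlast t ht]
          rwa [Fin.snoc_init_self, Fin.snoc_init_self] at h2
        calc Nat.card (signSet f c) ≤ Nat.card (signSet f' c') :=
              Nat.card_le_card_of_injective _ hinj
          _ ≤ ∑ i ∈ Finset.range (m + 1), p.choose i := ih m E hE f' c'
          _ ≤ ∑ i ∈ Finset.range (m + 1), (p+1).choose i :=
              Finset.sum_le_sum fun i _ => Nat.choose_le_choose i (Nat.le_succ p)
    · -- main case
      obtain ⟨z1, hz1⟩ : ∃ z1, F z1 ≠ 0 := by
        by_contra h
        push_neg at h
        exact hF0 (LinearMap.ext fun z => by simpa using h z)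
      have hnt : Nontrivial E := nontrivial_of_ne z1 0 (fun h => hz1 (by simp [h]))
      have hposrank : 0 < finrank ℝ E := finrank_pos
      obtain ⟨n, rfl⟩ : ∃ n, m = n + 1 := ⟨m - 1, by omega⟩
      have hsurj : ∀ r : ℝ, ∃ z, F z = r := fun r =>
        ⟨(r / F z1) • z1, by rw [map_smul, smul_eq_mul, div_mul_cancel₀ _ hz1]⟩
      obtain ⟨z0, hz0⟩ := hsurj (-C)
      set K := LinearMap.ker F with hKdef
      have hrange : LinearMap.range F = ⊤ :=
        LinearMap.range_eq_top.mpr (fun r => (hsurj r).imp fun z h => h)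
      have hKrank : finrank ℝ K ≤ n := by
        have h1 := LinearMap.finrank_range_add_finrank_ker F
        rw [hrange, finrank_top, ← hKdef] at h1
        have h2 : finrank ℝ ℝ = 1 := finrank_self ℝ
        omega
      set fr : Fin p → K →ₗ[ℝ] ℝ := fun i => (f' i).comp K.subtype with hfr
      set cr : Fin p → ℝ := fun i => f' i z0 + c' i with hcr
      set D : Set (Fin p → Bool) :=
        {s | Fin.snoc s true ∈ signSet f c ∧ Fin.snoc s false ∈ signSet f c} with hD
      -- Claim 2 : D injects into signSet fr cr
      have hD_sub : ∀ s ∈ D, s ∈ signSet fr cr := by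
        rintro s ⟨⟨zp, hzp⟩, ⟨zm, hzm⟩⟩
        have hu : 0 < F zp + C := by
          have h := hzp (Fin.last p)
          rw [Fin.snoc_last] at h
          exact of_decide_eq_true h.2
        have hv : F zm + C < 0 := by
          have h := hzm (Fin.last p)
          rw [Fin.snoc_last] at h
          have hnotlt : ¬ 0 < F zm + C := of_decide_eq_false h.2
          exact lt_of_le_of_ne (not_lt.mp hnotlt) h.1
        set t : ℝ := (F zp + C) / ((F zp + C) - (F zm + C)) with htdef
        have huv : 0 < (F zp + C) - (F zm + C) := by linarith
        have ht0 : 0 < t := div_pos hu huv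
        have ht1 : t < 1 := (div_lt_one huv).mpr (by linarith)
        have htuv : t * ((F zp + C) - (F zm + C)) = F zp + C := div_mul_cancel₀ _ huv.ne'
        set w := zp + t • (zm - zp) with hw
        have hFw : F w + C = 0 := by
          have hexp : F w + C = (F zp + C) + t * ((F zm + C) - (F zp + C)) := by
            simp only [hw, map_add, map_smul, map_sub, smul_eq_mul]
            ring
          rw [hexp]; linarith [htuv]
        have hker : w - z0 ∈ K := by
          rw [hKdef, LinearMap.mem_ker, map_sub, hz0]
          linarith [hFw]
        refine ⟨⟨w - z0, hker⟩, fun i => ?_⟩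
        have hcomp : fr i (⟨w - z0, hker⟩ : K) + cr i = f' i w + c' i := by
          simp only [hfr, hcr, LinearMap.comp_apply, Submodule.coe_subtype, map_sub]
          ring
        have hkey : f' i w + c' i = (1 - t) * (f' i zp + c' i) + t * (f' i zm + c' i) := by
          simp only [hw, map_add, map_smul, map_sub, smul_eq_mul]
          ring
        have hp' := hzp i.castSucc
        rw [Fin.snoc_castSucc] at hp'
        have hm' := hzm i.castSucc
        rw [Fin.snoc_castSucc] at hm'
        cases hsi : s i with
        | true =>
          rw [hsi] at hp' hm'
          have hA : 0 < f' i zp + c' i := of_decide_eq_true hp'.2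
          have hB : 0 < f' i zm + c' i := of_decide_eq_true hm'.2
          have hpos : 0 < (1 - t) * (f' i zp + c' i) + t * (f' i zm + c' i) :=
            combo_pos (by linarith) ht0.le (by ring) hA hB
          refine ⟨by rw [hcomp, hkey]; exact hpos.ne', ?_⟩
          rw [hcomp, hkey]
          exact decide_eq_true hpos
        | false =>
          rw [hsi] at hp' hm'
          have hA : f' i zp + c' i < 0 :=
            lt_of_le_of_ne (not_lt.mp (of_decide_eq_false hp'.2)) hp'.1
          have hB : f' i zm + c' i < 0 :=
            lt_of_le_of_ne (not_lt.mp (of_decide_eq_false hm'.2)) hm'.1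
          have hpos := combo_pos (by linarith : (0:ℝ) ≤ 1 - t) ht0.le (by ring)
            (neg_pos.mpr hA) (neg_pos.mpr hB)
          have hneg : (1 - t) * (f' i zp + c' i) + t * (f' i zm + c' i) < 0 := by
            have e : (1 - t) * -(f' i zp + c' i) + t * -(f' i zm + c' i) =
                -((1 - t) * (f' i zp + c' i) + t * (f' i zm + c' i)) := by ring
            rw [e] at hpos
            linarith
          refine ⟨by rw [hcomp, hkey]; exact hneg.ne, ?_⟩
          rw [hcomp, hkey]
          exact decide_eq_false (not_lt.mpr hneg.le)
      have hcardD : Nat.card D ≤ Nat.card (signSet fr cr) :=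
        Nat.card_le_card_of_injective (fun s => ⟨s.1, hD_sub s.1 s.2⟩)
          (fun x y h => Subtype.ext (by simpa using congrArg Subtype.val h))
      -- Claim 1 : card signSet f c ≤ card signSet f' c' + card D
      have hDrmem : ∀ s : Fin (p+1) → Bool, s ∈ signSet f c →
          (Fin.snoc (Fin.init s) (!(s (Fin.last p))) ∈ signSet f c ∧
            s (Fin.last p) = true) → Fin.init s ∈ D := by
        rintro s hs ⟨h1, h2⟩
        constructor
        · have e : Fin.snoc (Fin.init s) true = s := by rw [← h2]; exact Fin.snoc_init_self s
          rw [e]; exact hs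
        · have e : (!(s (Fin.last p))) = false := by rw [h2]; rfl
          rwa [e] at h1
      have key : Nat.card (signSet f c) ≤ Nat.card (signSet f' c') + Nat.card D := by
        set Φ : signSet f c → (signSet f' c') ⊕ D := fun s =>
          if h : Fin.snoc (Fin.init s.1) (!(s.1 (Fin.last p))) ∈ signSet f c ∧
              s.1 (Fin.last p) = true
          then Sum.inr ⟨Fin.init s.1, hDrmem s.1 s.2 h⟩
          else Sum.inl ⟨Fin.init s.1, hmem_init s.1 s.2⟩ with hΦdef
        have hΦ : Function.Injective Φ := by
          rintro ⟨s, hs⟩ ⟨t, ht⟩ hst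
          simp only [hΦdef] at hst
          split_ifs at hst with h1 h2 h2
          · have hinit : Fin.init s = Fin.init t :=
              congrArg Subtype.val (Sum.inr_injective hst)
            ext1
            show s = t
            have e : Fin.snoc (Fin.init s) (s (Fin.last p)) =
                Fin.snoc (Fin.init t) (t (Fin.last p)) := by rw [hinit, h1.2, h2.2]
            rwa [Fin.snoc_init_self, Fin.snoc_init_self] at e
          · have hinit : Fin.init s = Fin.init t :=
              congrArg Subtype.val (Sum.inl_injective hst)
            ext1
            show s = t
            by_cases hlast : s (Fin.last p) = t (Fin.last p)
            · have e : Fin.snoc (Fin.init s) (s (Fin.last p)) =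
                  Fin.snoc (Fin.init t) (t (Fin.last p)) := by rw [hinit, hlast]
              rwa [Fin.snoc_init_self, Fin.snoc_init_self] at e
            · exfalso
              have hbt : t (Fin.last p) = !(s (Fin.last p)) := by
                rcases Bool.eq_false_or_eq_true (s (Fin.last p)) with hbs | hbs <;>
                  rcases Bool.eq_false_or_eq_true (t (Fin.last p)) with hbt2 | hbt2 <;>
                  rw [hbs, hbt2] <;>
                  first
                    | rfl
                    | exact absurd (hbs.trans hbt2.symm) hlast
              have hmem1 : Fin.snoc (Fin.init s) (!(s (Fin.last p))) ∈ signSet f c := by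
                have e : Fin.snoc (Fin.init s) (!(s (Fin.last p))) = t := by
                  rw [hinit, ← hbt, Fin.snoc_init_self]
                rw [e]; exact ht
              have hs_last : s (Fin.last p) = false := by
                rcases Bool.eq_false_or_eq_true (s (Fin.last p)) with hbs | hbs
                · exact absurd ⟨hmem1, hbs⟩ h1
                · exact hbs
              have hbs' : (!(t (Fin.last p))) = s (Fin.last p) := by rw [hbt]; simp
              have hmem2 : Fin.snoc (Fin.init t) (!(t (Fin.last p))) ∈ signSet f c := by
                have e : Fin.snoc (Fin.init t) (!(t (Fin.last p))) = s := by
                  rw [← hinit, hbs', Fin.snoc_init_self]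
                rw [e]; exact hs
              exact h2 ⟨hmem2, by rw [hbt, hs_last]; rfl⟩
        have := Nat.card_le_card_of_injective Φ hΦ
        rwa [Nat.card_sum] at this
      have hS1 := ih (n + 1) E hE f' c'
      have hS2 := ih n K hKrank fr cr
      have hcombine := pascal_sum p (n + 1)
      omega

theorem regions_upper_bound (p m : ℕ) (hm : 1 ≤ m) (hpm : m ≤ p)
    (a : Fin p → Fin m → ℝ) (b : Fin p → ℝ) (ha : ∀ i, a i ≠ 0) :
    Nat.card (ConnectedComponents
        {z : Fin m → ℝ | ∀ i : Fin p, (∑ j, a i j * z j) ≠ b i}) ≤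
      ∑ i ∈ Finset.range (m + 1), p.choose i := by
  classical
  set f : Fin p → (Fin m → ℝ) →ₗ[ℝ] ℝ :=
    fun i => ∑ j, a i j • (LinearMap.proj j) with hfdef
  set c : Fin p → ℝ := fun i => -b i with hcdef
  have hfeval : ∀ i (z : Fin m → ℝ), f i z = ∑ j, a i j * z j := by
    intro i z
    simp [hfdef, LinearMap.sum_apply, LinearMap.smul_apply, LinearMap.proj_apply, smul_eq_mul]
  set X := {z : Fin m → ℝ | ∀ i : Fin p, (∑ j, a i j * z j) ≠ b i} with hXdef
  have hXne : ∀ (z : X) (i : Fin p), f i z.1 + c i ≠ 0 := by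
    intro z i h
    apply z.2 i
    have hb : c i = -b i := rfl
    rw [hfeval, hb] at h
    linarith
  set σ : X → (Fin p → Bool) := fun z i => decide (0 < f i z.1 + c i) with hσdef
  have hgc : ∀ i, Continuous (fun w : Fin m → ℝ => f i w + c i) :=
    fun i => ((f i).continuous_of_finiteDimensional).add continuous_const
  set Cv : (Fin p → Bool) → Set (Fin m → ℝ) := fun v =>
    ⋂ i, (if v i = true then {w | 0 < f i w + c i} else {w | f i w + c i < 0}) with hCvdef
  have hCv_mem : ∀ (v : Fin p → Bool) (w : Fin m → ℝ),
      w ∈ Cv v ↔ ∀ i, if v i = true then 0 < f i w + c i else f i w + c i < 0 := by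
    intro v w
    simp only [hCvdef, Set.mem_iInter]
    refine forall_congr' fun i => ?_
    split_ifs <;> rfl
  have hCv_open : ∀ v, IsOpen (Cv v) := by
    intro v
    refine isOpen_iInter_of_finite fun i => ?_
    split_ifs
    · exact isOpen_lt continuous_const (hgc i)
    · exact isOpen_lt (hgc i) continuous_const
  have hCv_convex : ∀ v, Convex ℝ (Cv v) := by
    intro v
    refine convex_iInter fun i => ?_
    split_ifs
    · have e : {w : Fin m → ℝ | 0 < f i w + c i} = {w | -c i < f i w} := by
        ext w; simp only [Set.mem_setOf_eq]; constructor <;> intro <;> linarith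
      rw [e]; exact convex_halfSpace_gt (f i).isLinear (-c i)
    · have e : {w : Fin m → ℝ | f i w + c i < 0} = {w | f i w < -c i} := by
        ext w; simp only [Set.mem_setOf_eq]; constructor <;> intro <;> linarith
      rw [e]; exact convex_halfSpace_lt (f i).isLinear (-c i)
  have hCv_subX : ∀ v, Cv v ⊆ X := by
    intro v w hw i
    have := (hCv_mem v w).mp hw i
    intro heq
    rw [hXdef] at *
    have h0 : f i w + c i ≠ 0 := by
      split_ifs at this
      · exact ne_of_gt this
      · exact ne_of_lt this
    exact h0 (by rw [hfeval, hcdef, heq]; ring)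
  have hfiber : ∀ (v : Fin p → Bool), Subtype.val ⁻¹' (Cv v) = σ ⁻¹' {v} := by
    intro v
    ext z
    simp only [Set.mem_preimage, Set.mem_singleton_iff, hCv_mem]
    constructor
    · intro h
      funext i
      have := h i
      rw [hσdef]
      split_ifs at this with hv
      · rw [hv]; exact decide_eq_true this
      · have hvf : v i = false := by rwa [Bool.not_eq_true] at hv
        rw [hvf]
        exact decide_eq_false (not_lt.mpr this.le)
    · intro h i
      have hzi := hXne z i
      rw [hσdef] at h
      have hi := congrFun h i
      split_ifs with hv
      · rw [hv] at hi; exact of_decide_eq_true hi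
      · have hvf : v i = false := by rwa [Bool.not_eq_true] at hv
        rw [hvf] at hi
        have hnlt : ¬ 0 < f i z.1 + c i := of_decide_eq_false hi
        exact lt_of_le_of_ne (not_lt.mp hnlt) (hXne z i)
  have hmemself : ∀ z : X, z ∈ Subtype.val ⁻¹' (Cv (σ z)) := by
    intro z
    rw [hfiber]
    rfl
  have hlc : IsLocallyConstant σ := by
    rw [IsLocallyConstant.iff_exists_open]
    intro z
    refine ⟨Subtype.val ⁻¹' (Cv (σ z)), (hCv_open (σ z)).preimage continuous_subtype_val,
      hmemself z, ?_⟩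
    intro y hy
    rw [hfiber] at hy
    exact hy
  have hcont : Continuous σ := hlc.continuous
  set σL : ConnectedComponents X → (Fin p → Bool) := hcont.connectedComponentsLift with hσL
  have hσL_coe : ∀ z : X, σL (ConnectedComponents.mk z) = σ z := fun z => rfl
  have hinj : Function.Injective σL := by
    intro q q'
    obtain ⟨x, rfl⟩ := ConnectedComponents.surjective_coe q
    obtain ⟨y, rfl⟩ := ConnectedComponents.surjective_coe q'
    intro h
    rw [hσL_coe, hσL_coe] at h
    have hpre : IsPreconnected ((Subtype.val ⁻¹' (Cv (σ x)) : Set X)) := by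
      have himg : Subtype.val '' ((Subtype.val ⁻¹' (Cv (σ x)) : Set X)) = Cv (σ x) := by
        rw [Subtype.image_preimage_coe]
        exact Set.inter_eq_right.mpr (hCv_subX (σ x))
      have := (hCv_convex (σ x)).isPreconnected
      rw [← himg] at this
      exact (Topology.IsInducing.subtypeVal.isPreconnected_image).mp this
    have hx := hmemself x
    have hy : y ∈ Subtype.val ⁻¹' (Cv (σ x)) := by
      rw [hfiber]
      exact h.symm
    have hycc : (y : X) ∈ connectedComponent x :=
      hpre.subset_connectedComponent hx hy
    exact ConnectedComponents.coe_eq_coe.mpr (connectedComponent_eq hycc)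
  have hmemS : ∀ q : ConnectedComponents X, σL q ∈ signSet f c := by
    intro q
    obtain ⟨x, rfl⟩ := ConnectedComponents.surjective_coe q
    rw [hσL_coe]
    exact ⟨x.1, fun i => ⟨hXne x i, rfl⟩⟩
  have hfinal : Nat.card (ConnectedComponents X) ≤ Nat.card (signSet f c) :=
    Nat.card_le_card_of_injective (fun q => (⟨σL q, hmemS q⟩ : signSet f c))
      (fun q q' h => hinj (by simpa using congrArg Subtype.val h))
  exact hfinal.trans (signSet_card_le p m (Fin m → ℝ) (le_of_eq (by simp)) f c)
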